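/- Let p be a prime, let m ≥ 1, and let s be a power of p with 1 < s < p^m. Then p^m − 1 does not divide (s − 1)(p^m + 1). -/
import Mathlib

/-- For a prime `p`, `m ≥ 1` and a power `s` of `p` with `1 < s < p^m`, the number
`p^m - 1` does not divide `(s - 1)(p^m + 1)`. -/
theorem not_dvd_sub_one (p : ℕ) (hp : p.Prime) (m : ℕ) (hm : 1 ≤ m) (s : ℕ)
    (hs : ∃ i : ℕ, 1 ≤ i ∧ s = p ^ i) (hs1 : 1 < s) (hsm : s < p ^ m) :
    ¬ (p ^ m - 1) ∣ (s - 1) * (p ^ m + 1) := by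
  intro h
  obtain ⟨i, hi1, hsi⟩ := hs
  have hp2 : 2 ≤ p := hp.two_le
  have him : i < m := by
    by_contra hle
    push_neg at hle
    exact absurd (Nat.pow_le_pow_right (le_of_lt hp.one_lt) hle) (by omega)
  -- p^m ≥ p * p^i ≥ 2 * s
  have h2s : 2 * s ≤ p ^ m := by
    calc 2 * s ≤ p * p ^ i := by rw [hsi]; exact Nat.mul_le_mul_right _ hp2
    _ = p ^ (i + 1) := by ring
    _ ≤ p ^ m := Nat.pow_le_pow_right (le_of_lt hp.one_lt) (by omega)
  have hpm1 : 1 < p ^ m := by omega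
  have key : (s - 1) * (p ^ m + 1) = (s - 1) * (p ^ m - 1) + 2 * (s - 1) := by
    have : 1 ≤ s := le_of_lt hs1
    cases' Nat.exists_eq_add_of_le this with k hk
    cases' Nat.exists_eq_add_of_le (le_of_lt hpm1) with j hj
    subst hk; rw [hj]; simp; ring
  rw [key] at h
  have hd : (p ^ m - 1) ∣ 2 * (s - 1) :=
    (Nat.dvd_add_right (dvd_mul_left _ _)).mp h
  have := Nat.le_of_dvd (by omega) hd
  omega
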